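/- arXiv:1502.05753 — 2 statements merged into one kernel-verified Lean document; each statement's English description precedes it below -/
import Mathlib

section
/- Fix an ordinal ξ, a finite set S, and a function f : 𝒯_{ω^ξ} → S. Then there exists an order preserving map i : 𝒯_{ω^ξ} → 𝒯_{ω^ξ} such that f ∘ i is constant. -/
open Ordinal

/-- `s` is a proper initial segment of `t`. -/
def ProperPrefix {S : Type*} (s t : List S) : Prop := s <+: t ∧ s ≠ t

/-- The maximal elements of a set of finite sequences with respect to the
proper-initial-segment order. -/
def maxElems {S : Type*} (T : Set (List S)) : Set (List S) :=
  {t ∈ T | ¬ ∃ u ∈ T, ProperPrefix t u}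

/-- The derived tree: remove the maximal elements. -/
def derivTree {S : Type*} (T : Set (List S)) : Set (List S) :=
  {t ∈ T | ∃ u ∈ T, ProperPrefix t u}

/-- Transfinite iterates of the derivation: `d^0 T = T`, `d^(ξ+1) T = (d^ξ T)'`,
and intersections at limit stages. -/
noncomputable def derivIter {S : Type*} (T : Set (List S)) (ξ : Ordinal) : Set (List S) :=
  Ordinal.limitRecOn ξ T (fun _ ih => derivTree ih)
    (fun o _ ih => ⋂ (ζ : Set.Iio o), ih ζ.1 ζ.2)

/-- A tree on `S`: a set of finite sequences closed under initial segments. -/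
def IsTree {S : Type*} (T : Set (List S)) : Prop :=
  ∀ ⦃s t : List S⦄, s <+: t → t ∈ T → s ∈ T

/-- A `B`-tree on `S`: a set of nonempty finite sequences which becomes a tree
after adjoining the empty sequence. -/
def IsBTree {S : Type*} (T : Set (List S)) : Prop :=
  [] ∉ T ∧ ∀ ⦃s t : List S⦄, s ≠ [] → s <+: t → t ∈ T → s ∈ T

/-- `T` has order exactly `ξ`: `ξ` is the least ordinal whose derived tree is empty. -/
def hasOrder {S : Type*} (T : Set (List S)) (ξ : Ordinal) : Prop :=
  derivIter T ξ = ∅ ∧ ∀ ζ < ξ, derivIter T ζ ≠ ∅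

/-- The minimal trees: `𝒯_0 = ∅`, `𝒯_(ξ+1) = {(ξ+1)} ∪ {(ξ+1)⌢t : t ∈ 𝒯_ξ}`,
and `𝒯_λ = ⋃_(ζ<λ) 𝒯_(ζ+1)` at limits. -/
noncomputable def minTree (ξ : Ordinal) : Set (List Ordinal) :=
  Ordinal.limitRecOn ξ ∅
    (fun ζ ih => {l : List Ordinal | l = [Order.succ ζ] ∨ ∃ t ∈ ih, l = Order.succ ζ :: t})
    (fun o ho ih => ⋃ (ζ : Set.Iio o), ih (Order.succ ζ.1) (ho.succ_lt ζ.2))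

universe v

namespace Ordinal

noncomputable def nadd (a b : Ordinal.{v}) : Ordinal.{v} :=
  sInf {c | (∀ a' (_ : a' < a), nadd a' b < c) ∧ ∀ b' (_ : b' < b), nadd a b' < c}
termination_by (a, b)

theorem nadd_eq (a b : Ordinal.{v}) : nadd a b =
    sInf {c | (∀ a' (_ : a' < a), nadd a' b < c) ∧ ∀ b' (_ : b' < b), nadd a b' < c} :=
  nadd.eq_1 a b

theorem nadd_mem (a b : Ordinal.{v}) : nadd a b ∈
    {c | (∀ a' (_ : a' < a), nadd a' b < c) ∧ ∀ b' (_ : b' < b), nadd a b' < c} := by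
  rw [nadd_eq a b]
  apply csInf_mem
  have h1 : BddAbove ((fun x => nadd x b) '' Set.Iio a) := bddAbove_of_small
  have h2 : BddAbove ((fun y => nadd a y) '' Set.Iio b) := bddAbove_of_small
  obtain ⟨m, hm⟩ := h1.union h2
  exact ⟨Order.succ m, fun a' h => Order.lt_succ_iff.2 (hm (Or.inl ⟨a', h, rfl⟩)),
    fun b' h => Order.lt_succ_iff.2 (hm (Or.inr ⟨b', h, rfl⟩))⟩

theorem nadd_lt_nadd_right {a' a : Ordinal.{v}} (h : a' < a) (b : Ordinal.{v}) : nadd a' b < nadd a b :=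
  (nadd_mem a b).1 a' h

theorem nadd_lt_nadd_left {b' b : Ordinal.{v}} (h : b' < b) (a : Ordinal.{v}) : nadd a b' < nadd a b :=
  (nadd_mem a b).2 b' h

theorem nadd_le_iff {a b c : Ordinal.{v}} :
    nadd a b ≤ c ↔ (∀ a' < a, nadd a' b < c) ∧ ∀ b' < b, nadd a b' < c := by
  constructor
  · intro h
    exact ⟨fun a' ha => (nadd_lt_nadd_right ha b).trans_le h,
      fun b' hb => (nadd_lt_nadd_left hb a).trans_le h⟩
  · intro h
    rw [nadd_eq a b]
    exact csInf_le' h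

@[simp]
theorem nadd_zero_zero : nadd (0 : Ordinal.{v}) 0 = 0 :=
  le_antisymm (nadd_le_iff.2 ⟨fun a h => absurd h (not_lt_of_ge (zero_le : (0 : Ordinal.{v}) ≤ a)),
    fun a h => absurd h (not_lt_of_ge (zero_le : (0 : Ordinal.{v}) ≤ a))⟩) (zero_le : (0 : Ordinal.{v}) ≤ _)

end Ordinal

namespace NaturalOps

infixl:65 " ♯ " => Ordinal.nadd

theorem nadd_def (a b : Ordinal) : a ♯ b = Ordinal.nadd a b := rfl

end NaturalOps

open Ordinal NaturalOps in
theorem MFC.omul_nat_succ (e : Ordinal) (k : ℕ) :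
    omega0 ^ e * (↑(k + 1) : Ordinal) = omega0 ^ e * (k : Ordinal) + omega0 ^ e := by
  push_cast
  rw [mul_add, mul_one]

open Ordinal NaturalOps in
/-- Key absorption bound, assuming nadd-principality below `ω^e`. -/
theorem MFC.nadd_block_bound (e : Ordinal)
    (he : ∀ x < (omega0 ^ e), ∀ y < (omega0 ^ e), x ♯ y < omega0 ^ e) :
    ∀ γ (k l : ℕ) (x y : Ordinal), x < omega0 ^ e → y < omega0 ^ e →
      (omega0 ^ e * k + x) ♯ (omega0 ^ e * l + y) = γ →
      γ ≤ omega0 ^ e * (↑(k + l) : Ordinal) + (x ♯ y) := by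
  intro γ
  induction γ using Ordinal.induction with
  | _ γ IH =>
    intro k l x y hx hy hγ
    have hw : (omega0 ^ e) ≠ 0 := (opow_pos e omega0_pos).ne'
    subst hγ
    rw [nadd_le_iff]
    constructor
    · intro a' ha'
      have ha2 : a' < omega0 ^ e * (↑(k + 1) : Ordinal) := by
        rw [MFC.omul_nat_succ]
        exact ha'.trans (add_lt_add_right hx _)
      have hdivn : a' / (omega0 ^ e) < omega0 :=
        ((Ordinal.div_lt hw).2 ha2).trans (nat_lt_omega0 (k+1))
      obtain ⟨k', hk'⟩ := lt_omega0.1 hdivn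
      have hkk : k' ≤ k := by
        have h2 := (Ordinal.div_lt hw).2 ha2
        rw [hk'] at h2
        have := Nat.cast_lt.mp h2
        omega
      have hx' : a' % (omega0 ^ e) < omega0 ^ e := Ordinal.mod_lt a' hw
      have hdecomp : a' = omega0 ^ e * k' + a' % (omega0 ^ e) := by
        conv_lhs => rw [← Ordinal.div_add_mod a' (omega0 ^ e)]
        rw [hk']
      have hlt : a' ♯ (omega0 ^ e * l + y) < (omega0 ^ e * k + x) ♯ (omega0 ^ e * l + y) :=
        nadd_lt_nadd_right ha' _
      have hIH := IH _ hlt k' l _ y hx' hy (by rw [← hdecomp])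
      rcases Nat.lt_or_ge k' k with hlt2 | hge
      · calc a' ♯ (omega0 ^ e * l + y)
            ≤ omega0 ^ e * (↑(k' + l) : Ordinal) + (a' % (omega0 ^ e) ♯ y) := hIH
          _ < omega0 ^ e * (↑(k' + l) : Ordinal) + omega0 ^ e :=
              add_lt_add_right (he _ hx' _ hy) _
          _ = omega0 ^ e * (↑(k' + l + 1) : Ordinal) := (MFC.omul_nat_succ e _).symm
          _ ≤ omega0 ^ e * (↑(k + l) : Ordinal) :=
              mul_le_mul_right (by rw [Nat.cast_le]; omega) _
          _ ≤ omega0 ^ e * (↑(k + l) : Ordinal) + (x ♯ y) := le_self_add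
      · have heq : k' = k := le_antisymm hkk hge
        rw [heq] at hIH hdecomp
        have hxx : a' % (omega0 ^ e) < x := by
          rw [hdecomp] at ha'
          exact lt_of_add_lt_add_left ha'
        calc a' ♯ (omega0 ^ e * l + y)
            ≤ omega0 ^ e * (↑(k + l) : Ordinal) + (a' % (omega0 ^ e) ♯ y) := hIH
          _ < omega0 ^ e * (↑(k + l) : Ordinal) + (x ♯ y) :=
              add_lt_add_right (nadd_lt_nadd_right hxx y) _
    · intro b' hb'
      have hb2 : b' < omega0 ^ e * (↑(l + 1) : Ordinal) := by
        rw [MFC.omul_nat_succ]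
        exact hb'.trans (add_lt_add_right hy _)
      have hdivn : b' / (omega0 ^ e) < omega0 :=
        ((Ordinal.div_lt hw).2 hb2).trans (nat_lt_omega0 (l+1))
      obtain ⟨l', hl'⟩ := lt_omega0.1 hdivn
      have hll : l' ≤ l := by
        have h2 := (Ordinal.div_lt hw).2 hb2
        rw [hl'] at h2
        have := Nat.cast_lt.mp h2
        omega
      have hy' : b' % (omega0 ^ e) < omega0 ^ e := Ordinal.mod_lt b' hw
      have hdecomp : b' = omega0 ^ e * l' + b' % (omega0 ^ e) := by
        conv_lhs => rw [← Ordinal.div_add_mod b' (omega0 ^ e)]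
        rw [hl']
      have hlt : (omega0 ^ e * k + x) ♯ b' < (omega0 ^ e * k + x) ♯ (omega0 ^ e * l + y) :=
        nadd_lt_nadd_left hb' _
      have hIH := IH _ hlt k l' x _ hx hy' (by rw [← hdecomp])
      rcases Nat.lt_or_ge l' l with hlt2 | hge
      · calc (omega0 ^ e * k + x) ♯ b'
            ≤ omega0 ^ e * (↑(k + l') : Ordinal) + (x ♯ b' % (omega0 ^ e)) := hIH
          _ < omega0 ^ e * (↑(k + l') : Ordinal) + omega0 ^ e :=
              add_lt_add_right (he _ hx _ hy') _
          _ = omega0 ^ e * (↑(k + l' + 1) : Ordinal) := (MFC.omul_nat_succ e _).symm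
          _ ≤ omega0 ^ e * (↑(k + l) : Ordinal) :=
              mul_le_mul_right (by rw [Nat.cast_le]; omega) _
          _ ≤ omega0 ^ e * (↑(k + l) : Ordinal) + (x ♯ y) := le_self_add
      · have heq : l' = l := le_antisymm hll hge
        rw [heq] at hIH hdecomp
        have hyy : b' % (omega0 ^ e) < y := by
          rw [hdecomp] at hb'
          exact lt_of_add_lt_add_left hb'
        calc (omega0 ^ e * k + x) ♯ b'
            ≤ omega0 ^ e * (↑(k + l) : Ordinal) + (x ♯ b' % (omega0 ^ e)) := hIH
          _ < omega0 ^ e * (↑(k + l) : Ordinal) + (x ♯ y) :=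
              add_lt_add_right (nadd_lt_nadd_left hyy _) _

open Ordinal NaturalOps in
/-- `ω^ξ` is closed under natural addition. -/
theorem MFC.nadd_lt_omega0_opow : ∀ (ξ : Ordinal), ∀ a < (omega0 ^ ξ), ∀ b < (omega0 ^ ξ),
    a ♯ b < omega0 ^ ξ := by
  intro ξ
  induction ξ using Ordinal.induction with
  | _ ξ IH =>
    intro a ha b hb
    rcases eq_or_ne (a ⊔ b) 0 with hc | hc
    · have ha0 : a = 0 := le_antisymm (by rw [← hc]; exact le_sup_left) (zero_le : (0 : Ordinal) ≤ a)
      have hb0 : b = 0 := le_antisymm (by rw [← hc]; exact le_sup_right) (zero_le : (0 : Ordinal) ≤ b)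
      subst ha0; subst hb0
      simpa using opow_pos ξ omega0_pos
    · set c := a ⊔ b with hcdef
      set e := log omega0 c with hedef
      have hce : c < omega0 ^ (Order.succ e) := lt_opow_succ_log_self one_lt_omega0 c
      have heξ : e < ξ := by
        by_contra hcon
        push_neg at hcon
        have h1 : omega0 ^ ξ ≤ omega0 ^ e := opow_le_opow_right omega0_pos hcon
        have h2 : omega0 ^ e ≤ c := opow_log_le_self omega0 hc
        have h3 : c < omega0 ^ ξ := sup_lt_iff.2 ⟨ha, hb⟩
        exact absurd (h1.trans h2) (not_le.2 h3)
      have hw : (omega0 ^ e) ≠ 0 := (opow_pos e omega0_pos).ne'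
      have hIHe : ∀ x < (omega0 ^ e), ∀ y < (omega0 ^ e), x ♯ y < omega0 ^ e := IH e heξ
      have hca : a < omega0 ^ e * omega0 := by
        rw [← opow_succ]
        exact le_sup_left.trans_lt hce
      have hcb : b < omega0 ^ e * omega0 := by
        rw [← opow_succ]
        exact le_sup_right.trans_lt hce
      obtain ⟨k, hk⟩ := lt_omega0.1 ((Ordinal.div_lt hw).2 hca)
      obtain ⟨l, hl⟩ := lt_omega0.1 ((Ordinal.div_lt hw).2 hcb)
      have hxa : a % (omega0 ^ e) < omega0 ^ e := Ordinal.mod_lt a hw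
      have hxb : b % (omega0 ^ e) < omega0 ^ e := Ordinal.mod_lt b hw
      have hda : a = omega0 ^ e * k + a % (omega0 ^ e) := by
        conv_lhs => rw [← Ordinal.div_add_mod a (omega0 ^ e)]
        rw [hk]
      have hdb : b = omega0 ^ e * l + b % (omega0 ^ e) := by
        conv_lhs => rw [← Ordinal.div_add_mod b (omega0 ^ e)]
        rw [hl]
      have hbound := MFC.nadd_block_bound e hIHe (a ♯ b) k l _ _ hxa hxb
        (by rw [← hda, ← hdb])
      calc a ♯ b ≤ omega0 ^ e * (↑(k + l) : Ordinal) + (a % (omega0 ^ e) ♯ b % (omega0 ^ e)) :=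
            hbound
        _ < omega0 ^ e * (↑(k + l) : Ordinal) + omega0 ^ e :=
            add_lt_add_right (hIHe _ hxa _ hxb) _
        _ = omega0 ^ e * (↑(k + l + 1) : Ordinal) := (MFC.omul_nat_succ e _).symm
        _ < omega0 ^ e * omega0 :=
            mul_lt_mul_of_pos_left (nat_lt_omega0 (k + l + 1)) (opow_pos e omega0_pos)
        _ = omega0 ^ (Order.succ e) := (opow_succ omega0 e).symm
        _ ≤ omega0 ^ ξ := opow_le_opow_right omega0_pos (Order.succ_le_iff.mpr heξ)
universe u

section PPLemmas
variable {S : Type*}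

theorem MFC.pp_length {s t : List S} (h : ProperPrefix s t) : s.length < t.length :=
  lt_of_le_of_ne h.1.length_le (fun hl => h.2 (h.1.eq_of_length hl))

theorem MFC.pp_trans {s t u : List S} (h1 : ProperPrefix s t) (h2 : ProperPrefix t u) :
    ProperPrefix s u :=
  ⟨h1.1.trans h2.1, fun he => absurd ((MFC.pp_length h1).trans (MFC.pp_length h2))
    (by rw [he]; exact lt_irrefl _)⟩

theorem MFC.pp_nil {t : List S} (h : t ≠ []) : ProperPrefix [] t :=
  ⟨List.nil_prefix, fun he => h he.symm⟩

theorem MFC.pp_cons {a : S} {s t : List S} (h : ProperPrefix s t) :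
    ProperPrefix (a :: s) (a :: t) :=
  ⟨List.cons_prefix_cons.2 ⟨rfl, h.1⟩, fun he => h.2 (by injection he)⟩

theorem MFC.pp_cons_cancel {a b : S} {s t : List S} (h : ProperPrefix (a :: s) (b :: t)) :
    a = b ∧ ProperPrefix s t := by
  obtain ⟨hab, hpre⟩ := List.cons_prefix_cons.1 h.1
  exact ⟨hab, hpre, fun he => h.2 (by rw [hab, he])⟩

end PPLemmas

/-- `Big X η b` : the set `X` contains, above the base `b`, witnesses of rank `≥ η`. -/
noncomputable def MFC.Big (X : Set (List Ordinal.{u})) (η : Ordinal.{u})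
    (b : List Ordinal.{u}) : Prop :=
  ∀ ζ < η, ∃ u ∈ X, ProperPrefix b u ∧ MFC.Big X ζ u
termination_by η

namespace MFC

theorem big_iff (X : Set (List Ordinal.{u})) (η : Ordinal.{u}) (b : List Ordinal.{u}) :
    Big X η b ↔ ∀ ζ < η, ∃ u ∈ X, ProperPrefix b u ∧ Big X ζ u := by
  rw [Big]

theorem big_zero (X : Set (List Ordinal.{u})) (b : List Ordinal.{u}) : Big X 0 b := by
  rw [big_iff]
  intro ζ hζ
  exact absurd hζ (not_lt_of_ge (zero_le : (0 : Ordinal) ≤ ζ))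

theorem big_mono_ord {X : Set (List Ordinal.{u})} {η η' : Ordinal.{u}} {b : List Ordinal.{u}}
    (hle : η' ≤ η) (h : Big X η b) : Big X η' b := by
  rw [big_iff] at h ⊢
  intro ζ hζ
  exact h ζ (hζ.trans_le hle)

theorem big_mono_set {X Y : Set (List Ordinal.{u})} (hXY : X ⊆ Y) :
    ∀ {η : Ordinal.{u}} {b : List Ordinal.{u}}, Big X η b → Big Y η b := by
  intro η
  induction η using Ordinal.induction with
  | _ η IH =>
    intro b h
    rw [big_iff] at h ⊢
    intro ζ hζ
    obtain ⟨w, hw, hbw, hB⟩ := h ζ hζ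
    exact ⟨w, hXY hw, hbw, IH ζ hζ hB⟩

theorem big_of_prefix {X : Set (List Ordinal.{u})} {η : Ordinal.{u}} {b v : List Ordinal.{u}}
    (hbu : ProperPrefix b v) (h : Big X η v) : Big X η b := by
  rw [big_iff] at h ⊢
  intro ζ hζ
  obtain ⟨w, hw, huw, hB⟩ := h ζ hζ
  exact ⟨w, hw, pp_trans hbu huw, hB⟩

theorem big_succ_iff {X : Set (List Ordinal.{u})} {ζ : Ordinal.{u}} {b : List Ordinal.{u}} :
    Big X (Order.succ ζ) b ↔ ∃ v ∈ X, ProperPrefix b v ∧ Big X ζ v := by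
  constructor
  · intro h
    rw [big_iff] at h
    exact h ζ (Order.lt_succ ζ)
  · rintro ⟨v, hv, hbv, hB⟩
    rw [big_iff]
    intro ζ' hζ'
    exact ⟨v, hv, hbv, big_mono_ord (Order.lt_succ_iff.1 hζ') hB⟩

theorem big_cons (a : Ordinal.{u}) {X : Set (List Ordinal.{u})} :
    ∀ {η : Ordinal.{u}} {b : List Ordinal.{u}},
      Big X η b → Big ((fun l => a :: l) '' X) η (a :: b) := by
  intro η
  induction η using Ordinal.induction with
  | _ η IH =>
    intro b h
    rw [big_iff] at h ⊢
    intro ζ hζ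
    obtain ⟨w, hw, hbw, hB⟩ := h ζ hζ
    exact ⟨a :: w, ⟨w, hw, rfl⟩, pp_cons hbw, IH ζ hζ hB⟩

theorem minTree_zero : minTree.{u} 0 = ∅ := by
  rw [minTree, Ordinal.limitRecOn_zero]

theorem minTree_succ (ζ : Ordinal.{u}) :
    minTree (Order.succ ζ) =
      {l : List Ordinal.{u} | l = [Order.succ ζ] ∨ ∃ t ∈ minTree ζ, l = Order.succ ζ :: t} := by
  rw [minTree, Ordinal.limitRecOn_succ]
  rfl

theorem minTree_limit {o : Ordinal.{u}} (ho : Order.IsSuccLimit o) :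
    minTree o = ⋃ (ζ : Set.Iio o), minTree (Order.succ ζ.1) := by
  rw [minTree, Ordinal.limitRecOn_limit _ _ _ _ ho]
  rfl

theorem mem_minTree_succ_head {ζ : Ordinal.{u}} {t : List Ordinal.{u}}
    (ht : t ∈ minTree (Order.succ ζ)) : ∃ r, t = Order.succ ζ :: r := by
  rw [minTree_succ] at ht
  rcases ht with h | ⟨s, _, h⟩
  · exact ⟨[], h⟩
  · exact ⟨s, h⟩

theorem minTree_ne_nil {η : Ordinal.{u}} {t : List Ordinal.{u}} (ht : t ∈ minTree η) :
    t ≠ [] := by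
  rcases Ordinal.zero_or_succ_or_isSuccLimit η with h0 | ⟨ζ, hζ⟩ | hlim
  · subst h0; rw [minTree_zero] at ht; exact absurd ht (Set.notMem_empty t)
  · subst hζ
    obtain ⟨r, hr⟩ := mem_minTree_succ_head ht
    simp [hr]
  · rw [minTree_limit hlim] at ht
    rw [Set.mem_iUnion] at ht
    obtain ⟨ζ, hζ⟩ := ht
    obtain ⟨r, hr⟩ := mem_minTree_succ_head hζ
    simp [hr]

/-- The minimal tree of order `η` has rank at least `η` above the empty sequence. -/
theorem big_minTree : ∀ η : Ordinal.{u}, Big (minTree η) η [] := by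
  intro η
  induction η using Ordinal.limitRecOn with
  | zero => exact big_zero _ _
  | add_one ζ ih =>
    rw [Ordinal.add_one_eq_succ]
    rw [big_succ_iff]
    refine ⟨[Order.succ ζ], ?_, pp_nil (by simp), ?_⟩
    · rw [minTree_succ]; exact Or.inl rfl
    · have h1 : Big ((fun l => Order.succ ζ :: l) '' minTree ζ) ζ [Order.succ ζ] :=
        big_cons (Order.succ ζ) ih
      refine big_mono_set ?_ h1
      rintro w ⟨s, hs, rfl⟩
      rw [minTree_succ]
      exact Or.inr ⟨s, hs, rfl⟩
  | limit o ho ih =>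
    rw [big_iff]
    intro ζ hζ
    have h1 : Big (minTree (Order.succ ζ)) (Order.succ ζ) ([] : List Ordinal.{u}) :=
      ih _ (ho.succ_lt hζ)
    have h2 : minTree (Order.succ ζ) ⊆ minTree o := by
      rw [minTree_limit ho]
      exact Set.subset_iUnion (fun ζ' : Set.Iio o => minTree (Order.succ ζ'.1)) ⟨ζ, hζ⟩
    have h3 : Big (minTree o) (Order.succ ζ) ([] : List Ordinal.{u}) := big_mono_set h2 h1
    rw [big_succ_iff] at h3
    exact h3

end MFC

open NaturalOps in
/-- Union bound for ranks via the Hessenberg (natural) sum. -/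
theorem MFC.big_union (A B : Set (List Ordinal.{u})) :
    ∀ (γ α β : Ordinal.{u}) (b : List Ordinal.{u}), γ = α ♯ β →
      ¬ Big A α b → ¬ Big B β b → ¬ Big (A ∪ B) γ b := by
  intro γ
  induction γ using Ordinal.induction with
  | _ γ IH =>
    intro α β b hγ hA hB hU
    have hA0 := hA
    have hB0 := hB
    rw [big_iff] at hA hB
    push_neg at hA hB
    obtain ⟨ζA, hζA, hA⟩ := hA
    obtain ⟨ζB, hζB, hB⟩ := hB
    have hζ : (ζA ♯ β) ⊔ (α ♯ ζB) < γ := by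
      rw [hγ]
      exact max_lt (Ordinal.nadd_lt_nadd_right hζA β) (Ordinal.nadd_lt_nadd_left hζB α)
    rw [big_iff] at hU
    obtain ⟨w, hwAB, hbw, hBig⟩ := hU _ hζ
    rcases hwAB with hwA | hwB
    · exact IH (ζA ♯ β) (by rw [hγ]; exact Ordinal.nadd_lt_nadd_right hζA β) ζA β w rfl
        (hA w hwA hbw) (fun h => hB0 (big_of_prefix hbw h))
        (big_mono_ord le_sup_left hBig)
    · exact IH (α ♯ ζB) (by rw [hγ]; exact Ordinal.nadd_lt_nadd_left hζB α) α ζB w rfl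
        (fun h => hA0 (big_of_prefix hbw h)) (hB w hwB hbw)
        (big_mono_ord le_sup_right hBig)

open NaturalOps in
/-- Pigeonhole: if a finite union has rank `δ` (with `δ` suitably closed), then some
member of the union already has rank `δ`. -/
theorem MFC.big_pigeonhole {S : Type*} [DecidableEq S] (A : S → Set (List Ordinal.{u}))
    (δ : Ordinal.{u}) (hδ0 : 0 < δ) (hδs : ∀ ζ < δ, Order.succ ζ < δ)
    (hδn : ∀ α < δ, ∀ β < δ, α ♯ β < δ) :
    ∀ (F : Finset S) (b : List Ordinal.{u}),
      Big (⋃ c ∈ F, A c) δ b → ∃ c ∈ F, Big (A c) δ b := by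
  intro F
  induction F using Finset.induction_on with
  | empty =>
    intro b h
    rw [big_iff] at h
    obtain ⟨w, hw, -⟩ := h 0 hδ0
    simp at hw
  | @insert a F ha ih =>
    intro b h
    rw [Finset.set_biUnion_insert] at h
    by_cases h1 : Big (A a) δ b
    · exact ⟨a, Finset.mem_insert_self a F, h1⟩
    by_cases h2 : Big (⋃ c ∈ F, A c) δ b
    · obtain ⟨c, hc, h3⟩ := ih b h2
      exact ⟨c, Finset.mem_insert_of_mem hc, h3⟩
    exfalso
    have e1 : ∃ ζ1 < δ, ¬ Big (A a) (Order.succ ζ1) b := by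
      rw [big_iff] at h1
      push_neg at h1
      obtain ⟨ζ, hζ, h1⟩ := h1
      refine ⟨ζ, hζ, ?_⟩
      rw [big_succ_iff]
      rintro ⟨w, hw, hbw, hB⟩
      exact h1 w hw hbw hB
    have e2 : ∃ ζ2 < δ, ¬ Big (⋃ c ∈ F, A c) (Order.succ ζ2) b := by
      rw [big_iff] at h2
      push_neg at h2
      obtain ⟨ζ, hζ, h2⟩ := h2
      refine ⟨ζ, hζ, ?_⟩
      rw [big_succ_iff]
      rintro ⟨w, hw, hbw, hB⟩
      exact h2 w hw hbw hB
    obtain ⟨ζ1, hζ1, hn1⟩ := e1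
    obtain ⟨ζ2, hζ2, hn2⟩ := e2
    have hlt : (Order.succ ζ1 ♯ Order.succ ζ2) < δ := hδn _ (hδs ζ1 hζ1) _ (hδs ζ2 hζ2)
    exact MFC.big_union (A a) (⋃ c ∈ F, A c) _ _ _ b rfl hn1 hn2
      (big_mono_ord hlt.le h)

/-- If `A` has rank at least `η` above base `b`, then there is an order preserving copy of
`minTree η` inside `A`, lying entirely above `b`. -/
theorem MFC.exists_embedding : ∀ (η : Ordinal.{u}) (A : Set (List Ordinal.{u}))
    (b : List Ordinal.{u}), Big A η b →
    ∃ i : List Ordinal.{u} → List Ordinal.{u},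
      (∀ t ∈ minTree η, i t ∈ A ∧ ProperPrefix b (i t)) ∧
      (∀ s ∈ minTree η, ∀ t ∈ minTree η, ProperPrefix s t → ProperPrefix (i s) (i t)) := by
  intro η
  induction η using Ordinal.limitRecOn with
  | zero =>
    intro A b _
    refine ⟨id, ?_, ?_⟩ <;> intro t ht <;> rw [minTree_zero] at ht <;>
      exact absurd ht (Set.notMem_empty t)
  | add_one ζ ih =>
    rw [Ordinal.add_one_eq_succ]
    intro A b hB
    rw [big_succ_iff] at hB
    obtain ⟨t₀, ht₀A, hbt₀, hB0⟩ := hB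
    obtain ⟨i', hi'mem, hi'pp⟩ := ih A t₀ hB0
    refine ⟨fun l => if l.tail = [] then t₀ else i' l.tail, ?_, ?_⟩
    · intro t ht
      rw [minTree_succ] at ht
      rcases ht with h | ⟨s, hs, h⟩
      · subst h
        simp only [List.tail_cons, if_pos rfl]
        exact ⟨ht₀A, hbt₀⟩
      · subst h
        have hsnil : s ≠ [] := minTree_ne_nil hs
        simp only [List.tail_cons, hsnil, reduceIte]
        obtain ⟨h1, h2⟩ := hi'mem s hs
        exact ⟨h1, pp_trans hbt₀ h2⟩
    · intro s hs t ht hst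
      rw [minTree_succ] at hs ht
      rcases hs with h | ⟨s', hs', h⟩
      · rcases ht with h2 | ⟨t', ht', h2⟩
        · exact absurd (h.trans h2.symm) hst.2
        · subst h; subst h2
          have ht'nil : t' ≠ [] := minTree_ne_nil ht'
          simp only [List.tail_cons, if_pos rfl, ht'nil, reduceIte]
          exact (hi'mem t' ht').2
      · rcases ht with h2 | ⟨t', ht', h2⟩
        · exfalso
          subst h; subst h2
          have hs'nil : s' ≠ [] := minTree_ne_nil hs'
          have hlen := pp_length hst
          simp only [List.length_cons, List.length_nil] at hlen
          have : s'.length = 0 := by omega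
          exact hs'nil (List.length_eq_zero_iff.1 this)
        · subst h; subst h2
          obtain ⟨-, hst'⟩ := pp_cons_cancel hst
          have hs'nil : s' ≠ [] := minTree_ne_nil hs'
          have ht'nil : t' ≠ [] := minTree_ne_nil ht'
          simp only [List.tail_cons, hs'nil, ht'nil, reduceIte]
          exact hi'pp s' hs' t' ht' hst'
  | limit o ho ih =>
    intro A b hB
    classical
    have H : ∀ ζ : Set.Iio o, ∃ i : List Ordinal.{u} → List Ordinal.{u},
        (∀ t ∈ minTree (Order.succ ζ.1), i t ∈ A ∧ ProperPrefix b (i t)) ∧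
        (∀ s ∈ minTree (Order.succ ζ.1), ∀ t ∈ minTree (Order.succ ζ.1),
          ProperPrefix s t → ProperPrefix (i s) (i t)) := by
      rintro ⟨ζ, hζ⟩
      exact ih (Order.succ ζ) (ho.succ_lt hζ) A b (big_mono_ord (ho.succ_lt hζ).le hB)
    choose I hImem hIpp using H
    refine ⟨fun l =>
      if h : ∃ ζ : Set.Iio o, l ∈ minTree (Order.succ ζ.1) then I h.choose l else l, ?_, ?_⟩
    · intro t ht
      rw [minTree_limit ho, Set.mem_iUnion] at ht
      have h : ∃ ζ : Set.Iio o, t ∈ minTree (Order.succ ζ.1) := ht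
      simp only [dif_pos h]
      exact hImem h.choose t h.choose_spec
    · intro s hs t ht hst
      rw [minTree_limit ho, Set.mem_iUnion] at hs ht
      have h1 : ∃ ζ : Set.Iio o, s ∈ minTree (Order.succ ζ.1) := hs
      have h2 : ∃ ζ : Set.Iio o, t ∈ minTree (Order.succ ζ.1) := ht
      simp only [dif_pos h1, dif_pos h2]
      have hs' := h1.choose_spec
      have ht' := h2.choose_spec
      obtain ⟨r1, hr1⟩ := mem_minTree_succ_head hs'
      obtain ⟨r2, hr2⟩ := mem_minTree_succ_head ht'
      have hhead : Order.succ h1.choose.1 = Order.succ h2.choose.1 := by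
        obtain ⟨w, hw⟩ := hst.1
        rw [hr1, hr2] at hw
        rw [List.cons_append] at hw
        have hw2 := hw
        rw [List.cons.injEq] at hw2
        exact hw2.1
      have hch : h1.choose = h2.choose := Subtype.ext (Order.succ_eq_succ_iff.mp hhead)
      rw [hch]
      rw [hch] at hs'
      exact hIpp h2.choose s hs' t ht' hst

/-- If `S` is a finite set and `f : 𝒯_{ω^ξ} → S`, then there is an order preserving
map `i : 𝒯_{ω^ξ} → 𝒯_{ω^ξ}` with `f ∘ i` constant. -/
theorem minTree_finite_coloring (ξ : Ordinal) (S : Type*) [Finite S]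
    (f : List Ordinal → S) :
    ∃ i : List Ordinal → List Ordinal,
      (∀ t ∈ minTree (Ordinal.omega0 ^ ξ), i t ∈ minTree (Ordinal.omega0 ^ ξ)) ∧
      (∀ s ∈ minTree (Ordinal.omega0 ^ ξ), ∀ t ∈ minTree (Ordinal.omega0 ^ ξ),
        ProperPrefix s t → ProperPrefix (i s) (i t)) ∧
      ∃ c : S, ∀ t ∈ minTree (Ordinal.omega0 ^ ξ), f (i t) = c := by
  classical
  by_cases hξ : ξ = 0
  · subst hξ
    refine ⟨id, fun t ht => ht, fun s hs t ht hst => hst, f [Order.succ 0], ?_⟩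
    intro t ht
    rw [opow_zero, ← Ordinal.succ_zero, MFC.minTree_succ] at ht
    rcases ht with h | ⟨s, hs, h⟩
    · subst h; rfl
    · rw [MFC.minTree_zero] at hs
      exact absurd hs (Set.notMem_empty s)
  · set δ := Ordinal.omega0 ^ ξ with hδdef
    have hlim : Order.IsSuccLimit δ := isSuccLimit_opow_left isSuccLimit_omega0 hξ
    have hδ0 : 0 < δ := opow_pos ξ omega0_pos
    have hδs : ∀ ζ < δ, Order.succ ζ < δ := fun ζ h => hlim.succ_lt h
    have hδn := MFC.nadd_lt_omega0_opow ξ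
    have : Fintype S := Fintype.ofFinite S
    set A : S → Set (List Ordinal) := fun c => {t | t ∈ minTree δ ∧ f t = c} with hAdef
    have hcover : minTree δ = ⋃ c ∈ (Finset.univ : Finset S), A c := by
      ext t
      simp only [Set.mem_iUnion, Finset.mem_univ, exists_true_left, hAdef, Set.mem_setOf_eq]
      exact ⟨fun h => ⟨f t, h, rfl⟩, fun ⟨c, h, _⟩ => h⟩
    have hbig : MFC.Big (minTree δ) δ [] := MFC.big_minTree δ
    rw [hcover] at hbig
    obtain ⟨c, -, hc⟩ := MFC.big_pigeonhole A δ hδ0 hδs hδn Finset.univ [] hbig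
    obtain ⟨i, himem, hipp⟩ := MFC.exists_embedding δ (A c) [] hc
    exact ⟨i, fun t ht => (himem t ht).1.1, fun s hs t ht hst => hipp s hs t ht hst,
      c, fun t ht => (himem t ht).1.2⟩
end

section
/- Let X be a Banach space and (x_i)_{i=1}^n vectors with ‖x_i‖ ≥ 1 for all i, and let ε ∈ [0,1). If ‖Σ_{i=1}^n a_i x_i‖ ≤ (1+ε) max_i |a_i| for all scalars (a_i), then ‖Σ_{i=1}^n a_i x_i‖ ≥ (1−ε) max_i |a_i| for all scalars (a_i); hence ((1+ε)^{-1} x_i)_{i=1}^n is (1+ε)(1−ε)^{-1}-equivalent to the unit vector basis of ℓ_∞^n. -/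
open scoped BigOperators

/-- James's argument for `c₀` lower estimates: if `‖x_i‖ ≥ 1` for all `i` and
`‖∑ a_i x_i‖ ≤ (1+ε) max |a_i|` for all scalars, with `0 ≤ ε < 1`, then
`‖∑ a_i x_i‖ ≥ (1−ε) max |a_i|`; hence `((1+ε)⁻¹ x_i)` is
`(1+ε)(1−ε)⁻¹`-equivalent to the `ℓ∞^n` unit vector basis. -/
theorem james_c0_lower_estimate {X : Type*} [NormedAddCommGroup X] [NormedSpace ℝ X]
    [CompleteSpace X] (n : ℕ) (x : Fin n → X) (hx : ∀ i, 1 ≤ ‖x i‖)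
    (ε : ℝ) (hε0 : 0 ≤ ε) (hε1 : ε < 1)
    (hupper : ∀ (a : Fin n → ℝ) (M : ℝ), 0 ≤ M → (∀ i, |a i| ≤ M) →
      ‖∑ i, a i • x i‖ ≤ (1 + ε) * M) :
    (∀ (a : Fin n → ℝ) (i : Fin n), (1 - ε) * |a i| ≤ ‖∑ j, a j • x j‖) ∧
    (∀ (a : Fin n → ℝ) (M : ℝ), 0 ≤ M → (∀ i, |a i| ≤ M) →
      ‖∑ i, a i • ((1 + ε)⁻¹ • x i)‖ ≤ M) ∧
    (∀ (a : Fin n → ℝ) (i : Fin n),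
      ((1 - ε) / (1 + ε)) * |a i| ≤ ‖∑ j, a j • ((1 + ε)⁻¹ • x j)‖) := by
  have hε1' : (0:ℝ) < 1 + ε := by linarith
  have key : ∀ (a : Fin n → ℝ) (i : Fin n), (1 - ε) * |a i| ≤ ‖∑ j, a j • x j‖ := by
    intro a i
    have hne : (Finset.univ : Finset (Fin n)).Nonempty := ⟨i, Finset.mem_univ i⟩
    obtain ⟨j, -, hj⟩ := Finset.exists_mem_eq_sup' hne (fun k => |a k|)
    set M := Finset.univ.sup' hne (fun k => |a k|) with hM
    have hMle : ∀ k, |a k| ≤ M := fun k => by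
      rw [hM]; exact Finset.le_sup' (fun k => |a k|) (Finset.mem_univ k)
    have hM0 : 0 ≤ M := le_trans (abs_nonneg _) (hMle i)
    set b : Fin n → ℝ := fun k => if k = j then a j else -a k with hb
    have hbM : ∀ k, |b k| ≤ M := by
      intro k
      by_cases h : k = j
      · simpa [hb, h] using hMle j
      · simpa [hb, h, abs_neg] using hMle k
    have hw' : ‖∑ k, b k • x k‖ ≤ (1 + ε) * M := hupper b M hM0 hbM
    have hw : ‖∑ k, a k • x k‖ ≤ (1 + ε) * M := hupper a M hM0 hMle
    have hsum : (∑ k, a k • x k) + (∑ k, b k • x k) = (2 * a j) • x j := by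
      rw [← Finset.sum_add_distrib, Finset.sum_eq_single j]
      · simp [hb, two_mul, add_smul]
      · intro k _ hk; simp [hb, hk]
      · intro h; exact absurd (Finset.mem_univ j) h
    have h2 : 2 * |a j| ≤ ‖(2 * a j) • x j‖ := by
      rw [norm_smul, Real.norm_eq_abs, abs_mul]
      have := hx j
      have habs : |(2:ℝ)| = 2 := by norm_num
      rw [habs]
      nlinarith [abs_nonneg (a j)]
    have htri : ‖(2 * a j) • x j‖ ≤ ‖∑ k, a k • x k‖ + ‖∑ k, b k • x k‖ := by
      rw [← hsum]; exact norm_add_le _ _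
    have hMw : (1 - ε) * M ≤ ‖∑ k, a k • x k‖ := by
      have : M = |a j| := hj
      nlinarith
    calc (1 - ε) * |a i| ≤ (1 - ε) * M := by
          have := hMle i; nlinarith
      _ ≤ ‖∑ k, a k • x k‖ := hMw
  refine ⟨key, ?_, ?_⟩
  · intro a M hM0 haM
    have : ∑ i, a i • ((1 + ε)⁻¹ • x i) = (1 + ε)⁻¹ • ∑ i, a i • x i := by
      rw [Finset.smul_sum]
      congr 1; ext i; rw [smul_comm]
    rw [this, norm_smul, Real.norm_eq_abs, abs_of_pos (inv_pos.mpr hε1')]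
    have := hupper a M hM0 haM
    rw [inv_mul_le_iff₀ hε1']
    linarith [this]
  · intro a i
    have : ∑ k, a k • ((1 + ε)⁻¹ • x k) = (1 + ε)⁻¹ • ∑ k, a k • x k := by
      rw [Finset.smul_sum]
      congr 1; ext k; rw [smul_comm]
    rw [this, norm_smul, Real.norm_eq_abs, abs_of_pos (inv_pos.mpr hε1')]
    have h := key a i
    have h2 := mul_le_mul_of_nonneg_left h (inv_pos.mpr hε1').le
    calc ((1 - ε) / (1 + ε)) * |a i| = (1 + ε)⁻¹ * ((1 - ε) * |a i|) := by ring
      _ ≤ _ := h2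
end
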